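/- Let C ∈ {B,W}, let v̂, û be grey nodes of Ĥ_{C,d} (i.e., f_C(v̂) = f_C(û) = G), and let t ∈ ℕ be such that the corresponding nodes v and u of H_{C,d} are t-SV-bisimilar. If w ∈ dom(f_{v,u}), dist(w, v_C) < 2d − t and dist(f_{v,u}(w), v_C) < 2d − t (where dist is graph distance in H_{C,d} and v_C = ∅ is the root), then w and f_{v,u}(w) are t-SV-bisimilar in (H_{C,d}, f_C, p_C). -/

import Mathlib

namespace Paper

/-- The degree of a vertex: the number of its neighbours. -/
noncomputable def deg {V : Type} (G : SimpleGraph V) (v : V) : ℕ :=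
  {u | G.Adj v u}.ncard

/-- A port numbering of a graph, modelled as a partial map sending each
output port `(v, i)` with `1 ≤ i ≤ deg v` to an input port `(u, j)` of an
adjacent node `u`, bijectively, such that there is a port between `v` and `u`
if and only if they are adjacent. -/
structure IsPortNumbering {V : Type} (G : SimpleGraph V)
    (pn : V → ℕ → Option (V × ℕ)) : Prop where
  dom : ∀ v i, (pn v i).isSome ↔ 1 ≤ i ∧ i ≤ deg G v
  adj : ∀ v i u j, pn v i = some (u, j) → G.Adj v u ∧ 1 ≤ j ∧ j ≤ deg G u
  bij : ∀ u j, 1 ≤ j → j ≤ deg G u → ∃! vi : V × ℕ, pn vi.1 vi.2 = some (u, j)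
  edge : ∀ v u, G.Adj v u ↔ ∃ i j, pn v i = some (u, j)

/-- A generalised port numbering with port numbers from an arbitrary set `N`:
each node `v` has a set of `deg v` output port numbers (those `o` with
`pn v o ≠ none`) and a set of `deg v` input port numbers (those `i` received
from some output port), and `pn` is a bijection from output ports to input
ports of adjacent nodes. -/
structure IsGenPortNumbering {V N : Type} (G : SimpleGraph V)
    (pn : V → N → Option (V × N)) : Prop where
  adj : ∀ v o u i, pn v o = some (u, i) → G.Adj v u
  edge : ∀ v u, G.Adj v u → ∃ o i, pn v o = some (u, i)
  inj : ∀ v o v' o' u i, pn v o = some (u, i) → pn v' o' = some (u, i) →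
    v = v' ∧ o = o'
  out_card : ∀ v, {o | (pn v o).isSome}.ncard = deg G v
  in_card : ∀ u, {i | ∃ v o, pn v o = some (u, i)}.ncard = deg G u

/-- `r`-SV-bisimilarity of `(G, f, v, p)` and `(G', f', v', p')`. -/
def SVBisim {V V' X N : Type} (G : SimpleGraph V) (G' : SimpleGraph V')
    (f : V → X) (f' : V' → X)
    (p : V → N → Option (V × N)) (p' : V' → N → Option (V' × N)) :
    ℕ → V → V' → Prop
  | 0, v, v' => deg G v = deg G' v' ∧ f v = f' v'
  | r + 1, v, v' =>
      (deg G v = deg G' v' ∧ f v = f' v') ∧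
      (∀ w, G.Adj v w → ∃ w', G'.Adj v' w' ∧
        SVBisim G G' f f' p p' r w w' ∧
        ∃ a b c, p w a = some (v, b) ∧ p' w' a = some (v', c)) ∧
      (∀ w', G'.Adj v' w' → ∃ w, G.Adj v w ∧
        SVBisim G G' f f' p p' r w w' ∧
        ∃ a b c, p w a = some (v, b) ∧ p' w' a = some (v', c))

/-- Nodes of the tree `G_d` are finite sequences of pairs of numbers.
We represent a sequence `(a₁, …, a_i)` as the list `[a_i, …, a₁]`, i.e. in
reverse order, so that consing corresponds to appending a pair at the end. -/
abbrev Nd : Type := ℕ × ℕ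

/-- `b₂⁺`: `1` if `b₂ = 0`, and `b₂` otherwise. -/
def bplus (b : ℕ) : ℕ := if b = 0 then 1 else b

/-- For `j ≥ 1`, the `j`-th smallest element of `{lo, lo+1, lo+2, …} \ {f}`.
This realises the greedy choices `c^j = min({lo,…} \ {f, c¹, …, c^{j-1}})`. -/
def nthAvoid (lo f j : ℕ) : ℕ :=
  if lo + j - 1 < f ∨ f < lo then lo + j - 1 else lo + j

/-- The node set `V_d` of the graph `G_d`, given by the rules (G1)–(G4).
(Sequences are represented as reversed lists, the head being the last pair
`a_i` of the sequence.) -/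
inductive Vd (d : ℕ) : List Nd → Prop
  /-- (G1): the empty sequence is a node. -/
  | nil : Vd d []
  /-- (G2): the sequences `((1,0)), ((2,1)), …, ((d,d−1))` are nodes. -/
  | base (k : ℕ) (h1 : 1 ≤ k) (h2 : k ≤ d) : Vd d [(k, k - 1)]
  /-- (G3): children of a node of odd length `< 2d` with last pair `(b₁, b₂)`:
  for `j = 1, …, d−1` append `(c₁ʲ, c₂ʲ)` where `c₁ʲ` is the `j`-th smallest
  element of `{1,…,d} \ {b₂⁺}` and `c₂ʲ` the `j`-th smallest of `{1,…,d} \ {b₁}`. -/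
  | odd (b₁ b₂ : ℕ) (rest : List Nd)
      (hv : Vd d ((b₁, b₂) :: rest))
      (hodd : Odd ((b₁, b₂) :: rest).length)
      (hlt : ((b₁, b₂) :: rest).length < 2 * d)
      (j : ℕ) (hj1 : 1 ≤ j) (hj2 : j ≤ d - 1) :
      Vd d ((nthAvoid 1 (bplus b₂) j, nthAvoid 1 b₁ j) :: (b₁, b₂) :: rest)
  /-- (G4): children of a node of even positive length `< 2d` with last pair
  `(b₁, b₂)`: for `j = 1, …, d−1` append `(c₁ʲ, c₂ʲ)` where `c₁ʲ` is the `j`-th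
  smallest element of `{1,…,d} \ {b₂}` and `c₂ʲ` the `j`-th smallest of
  `{0,…,d−1} \ {b₁}`. -/
  | even (b₁ b₂ : ℕ) (rest : List Nd)
      (hv : Vd d ((b₁, b₂) :: rest))
      (heven : Even ((b₁, b₂) :: rest).length)
      (hlt : ((b₁, b₂) :: rest).length < 2 * d)
      (j : ℕ) (hj1 : 1 ≤ j) (hj2 : j ≤ d - 1) :
      Vd d ((nthAvoid 1 b₂ j, nthAvoid 0 b₁ j) :: (b₁, b₂) :: rest)

/-- The edge relation of `G_d`: `u` is a child of `v` or vice versa. -/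
def Ed (d : ℕ) (v u : List Nd) : Prop :=
  Vd d v ∧ Vd d u ∧ ∃ a : Nd, u = a :: v ∨ v = a :: u

/-- The outgoing port number `π_d(v, u)` from `v` towards an adjacent node `u`:
if `u = (b₁, b₂) :: v` is a child of `v` then `b₁`, and if `v = (b₁, b₂) :: u`
is a child of `u` then `b₂`. -/
def outPort (v u : List Nd) : ℕ :=
  if u.length = v.length + 1 then u.headI.1 else v.headI.2

/-- A pair of compatible walks (PCW) of length `k` in `G_d`:
two walks starting at `((1,0))` and `((2,1))` such that the outgoing port
numbers backwards along the walks coincide. -/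
structure IsPCW (d k : ℕ) (w₁ w₂ : ℕ → List Nd) : Prop where
  klen : k ≤ 2 * d - 3
  walk₁ : ∀ j < k, Ed d (w₁ j) (w₁ (j + 1))
  walk₂ : ∀ j < k, Ed d (w₂ j) (w₂ (j + 1))
  start₁ : w₁ 0 = [(1, 0)]
  start₂ : w₂ 0 = [(2, 1)]
  compat : ∀ j, 1 ≤ j → j ≤ k →
    outPort (w₁ j) (w₁ (j - 1)) = outPort (w₂ j) (w₂ (j - 1))

/-- A pair of separating walks (PSW): a PCW such that the last node of the
first walk has a neighbour whose outgoing port number towards it is matched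
by no neighbour of the last node of the second walk. -/
structure IsPSW (d k : ℕ) (w₁ w₂ : ℕ → List Nd)
    extends IsPCW d k w₁ w₂ : Prop where
  sep : ∃ x, Ed d (w₁ k) x ∧
    ∀ y, Ed d (w₂ k) y → outPort x (w₁ k) ≠ outPort y (w₂ k)

/-- A PSW of length `k` in `G_d` is critical if there is no strictly shorter
PSW in `G_d`. -/
def IsCriticalPSW (d k : ℕ) (w₁ w₂ : ℕ → List Nd) : Prop :=
  IsPSW d k w₁ w₂ ∧ ∀ k' w₁' w₂', IsPSW d k' w₁' w₂' → k ≤ k'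

/-- The three colours: black, white, grey. -/
inductive Col : Type
  | B | W | G
deriving DecidableEq

/-- The complementary colour: `B̄ = W`, `W̄ = B` (grey is left untouched). -/
def Col.flip : Col → Col
  | Col.B => Col.W
  | Col.W => Col.B
  | Col.G => Col.G


/-- Nodes of the trees `H_{C,d}` are finite sequences of triples
(number, number, colour), represented as reversed lists. -/
abbrev Nd3 : Type := ℕ × ℕ × Col

/-- The colouring `f_C`: the root gets grey, any other node the colour
component of its last triple. -/
def fH : List Nd3 → Col
  | [] => Col.G
  | (_, _, c) :: _ => c

/-- The node set `V_{C,d}` of the graph `H_{C,d}`, given by rules (H1)–(H6). -/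
inductive VH (C : Col) (d : ℕ) : List Nd3 → Prop
  /-- (H1): the empty sequence is a node. -/
  | nil : VH C d []
  /-- (H2): the sequences `((1,0,C)), ((2,1,C)), …, ((d,d−1,C))`. -/
  | base (k : ℕ) (h1 : 1 ≤ k) (h2 : k ≤ d) : VH C d [(k, k - 1, C)]
  /-- (H3): the sequences `((2,1,C̄)), …, ((d,d−1,C̄))`. -/
  | base' (k : ℕ) (h1 : 2 ≤ k) (h2 : k ≤ d) : VH C d [(k, k - 1, Col.flip C)]
  /-- (H4): grey children of a node of odd length `< 2d` with last triple
  `(b₁, b₂, c)`, `c ∈ {B, W}`. -/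
  | odd (b₁ b₂ : ℕ) (c : Col) (rest : List Nd3)
      (hc : c ≠ Col.G)
      (hv : VH C d ((b₁, b₂, c) :: rest))
      (hodd : Odd ((b₁, b₂, c) :: rest).length)
      (hlt : ((b₁, b₂, c) :: rest).length < 2 * d)
      (j : ℕ) (hj1 : 1 ≤ j) (hj2 : j ≤ d - 1) :
      VH C d ((nthAvoid 1 (bplus b₂) j, nthAvoid 1 b₁ j, Col.G) ::
        (b₁, b₂, c) :: rest)
  /-- (H5): children of colour `c` of a grey node of even positive length
  `< 2d` with last triple `(b₁, b₂, G)` and previous triple `(d₁, d₂, c)`,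
  `c ∈ {B, W}`. -/
  | evenSame (b₁ b₂ d₁ d₂ : ℕ) (c : Col) (rest : List Nd3)
      (hc : c ≠ Col.G)
      (hv : VH C d ((b₁, b₂, Col.G) :: (d₁, d₂, c) :: rest))
      (heven : Even ((b₁, b₂, Col.G) :: (d₁, d₂, c) :: rest).length)
      (hlt : ((b₁, b₂, Col.G) :: (d₁, d₂, c) :: rest).length < 2 * d)
      (j : ℕ) (hj1 : 1 ≤ j) (hj2 : j ≤ d - 1) :
      VH C d ((nthAvoid 1 b₂ j, nthAvoid 0 b₁ j, c) ::
        (b₁, b₂, Col.G) :: (d₁, d₂, c) :: rest)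
  /-- (H6): children of colour `c̄` of a grey node of even positive length
  `< 2d` with previous triple `(d₁, d₂, c)`, `c ∈ {B, W}`; here
  `c₁ʲ = min({2,…,d} \ {c₁¹,…}) = j + 1` and `c₂ʲ = min({1,…,d−1} \ {c₂¹,…}) = j`. -/
  | evenFlip (b₁ b₂ d₁ d₂ : ℕ) (c : Col) (rest : List Nd3)
      (hc : c ≠ Col.G)
      (hv : VH C d ((b₁, b₂, Col.G) :: (d₁, d₂, c) :: rest))
      (heven : Even ((b₁, b₂, Col.G) :: (d₁, d₂, c) :: rest).length)
      (hlt : ((b₁, b₂, Col.G) :: (d₁, d₂, c) :: rest).length < 2 * d)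
      (j : ℕ) (hj1 : 1 ≤ j) (hj2 : j ≤ d - 1) :
      VH C d ((j + 1, j, Col.flip c) ::
        (b₁, b₂, Col.G) :: (d₁, d₂, c) :: rest)

/-- The edge relation of `H_{C,d}`. -/
def EH (C : Col) (d : ℕ) (v u : List Nd3) : Prop :=
  VH C d v ∧ VH C d u ∧ ∃ a : Nd3, u = a :: v ∨ v = a :: u

/-- The graph `H_{C,d}` as a simple graph on all lists of triples. -/
def HGraph (C : Col) (d : ℕ) : SimpleGraph (List Nd3) where
  Adj v u := EH C d v u
  symm := by
    constructor
    rintro v u ⟨hv, hu, a, h⟩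
    exact ⟨hu, hv, a, h.symm⟩
  loopless := by
    constructor
    rintro v ⟨-, -, a, h | h⟩ <;>
      exact absurd (congrArg List.length h) (by simp)

/-- Membership in the induced subgraph `Ĥ_{C,d}`: every prefix of the
sequence (i.e. every suffix of the reversed list) is grey or of colour `C`. -/
def inHat (C : Col) (v : List Nd3) : Prop :=
  ∀ s : List Nd3, s <:+ v → (fH s = C ∨ fH s = Col.G)

/-- The induced subgraph `Ĥ_{C,d}` of `H_{C,d}`. -/
def HhatGraph (C : Col) (d : ℕ) : SimpleGraph (List Nd3) where
  Adj v u := EH C d v u ∧ inHat C v ∧ inHat C u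
  symm := by
    constructor
    rintro v u ⟨⟨hv, hu, a, h⟩, h1, h2⟩
    exact ⟨⟨hu, hv, a, h.symm⟩, h2, h1⟩
  loopless := by
    constructor
    rintro v ⟨⟨-, -, a, h | h⟩, -, -⟩ <;>
      exact absurd (congrArg List.length h) (by simp)

open Classical in
/-- The generalised port numbering `p_C` of `H_{C,d}`, with port numbers that
are pairs (number, colour): along the edge between a node and its child, each
of the two outgoing port labels consists of the corresponding number of the
child's last triple together with the colour of the node at the other end. -/
noncomputable def pH (C : Col) (d : ℕ) (v : List Nd3) (q : ℕ × Col) :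
    Option (List Nd3 × (ℕ × Col)) :=
  if h : ∃ c₂ : ℕ, VH C d ((q.1, c₂, q.2) :: v) then
    some ((q.1, h.choose, q.2) :: v, (h.choose, fH v))
  else
    match v with
    | (b₁, b₂, cv) :: w =>
        if q = (b₂, fH w) ∧ VH C d ((b₁, b₂, cv) :: w) then
          some (w, (b₁, cv))
        else none
    | [] => none

open Classical in
/-- The restriction of the generalised port numbering `p_C` to the induced
subgraph `Ĥ_{C,d}`. -/
noncomputable def pHhat (C : Col) (d : ℕ) (v : List Nd3) (q : ℕ × Col) :
    Option (List Nd3 × (ℕ × Col)) :=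
  match pH C d v q with
  | some (u, a) => if inHat C v ∧ inHat C u then some (u, a) else none
  | none => none

/-- The isomorphism `g_C` from `Ĥ_{C,d}` to `G_d`: forget the colours. -/
def gC (v : List Nd3) : List Nd := v.map (fun t => (t.1, t.2.1))


section AuxProofs

lemma flip_ne_self {c : Col} (hc : c ≠ Col.G) : Col.flip c ≠ c := by
  cases c <;> simp_all [Col.flip]

lemma flip_ne_G {c : Col} (hc : c ≠ Col.G) : Col.flip c ≠ Col.G := by
  cases c <;> simp_all [Col.flip]

lemma nthAvoid_inj {lo f j j' : ℕ} (hj : 1 ≤ j) (hj' : 1 ≤ j')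
    (h : nthAvoid lo f j = nthAvoid lo f j') : j = j' := by
  unfold nthAvoid at h; split_ifs at h <;> omega

lemma nthAvoid_ne {f j : ℕ} (hj : 1 ≤ j) : nthAvoid 1 f j ≠ f := by
  unfold nthAvoid; split_ifs <;> omega

lemma nthAvoid_bplus_ne {b j : ℕ} (hj : 1 ≤ j) : nthAvoid 1 (bplus b) j ≠ b := by
  unfold nthAvoid bplus; split_ifs <;> omega

lemma VH_tail {C : Col} {d : ℕ} {a : Nd3} {w : List Nd3}
    (h : VH C d (a :: w)) : VH C d w := by
  cases h <;> first | exact VH.nil | assumption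

lemma grey_even {C : Col} {d : ℕ} {x : List Nd3} (hC : C ≠ Col.G)
    (h : VH C d x) (hg : fH x = Col.G) : Even x.length := by
  cases h with
  | nil => simp
  | base k h1 h2 => exact absurd ((by simp [fH] at hg; exact hg.symm) : Col.G = C) (Ne.symm hC)
  | base' k h1 h2 => exact absurd (by simp [fH] at hg; exact hg) (flip_ne_G hC)
  | odd b₁ b₂ c rest hc hv hodd hlt j hj1 hj2 =>
      simp only [List.length_cons, Nat.odd_iff] at hodd
      simp only [List.length_cons, Nat.even_iff]
      omega
  | evenSame b₁ b₂ d₁ d₂ c rest hc hv heven hlt j hj1 hj2 => exact absurd (by simp [fH] at hg; exact hg) hc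
  | evenFlip b₁ b₂ d₁ d₂ c rest hc hv heven hlt j hj1 hj2 => exact absurd (by simp [fH] at hg; exact hg) (flip_ne_G hc)

end AuxProofs


lemma child_shape {C : Col} {d : ℕ} {a : Nd3} {w : List Nd3} (h : VH C d (a :: w)) :
    (∃ k, 1 ≤ k ∧ k ≤ d ∧ w = [] ∧
      (a = (k, k - 1, C) ∨ 2 ≤ k ∧ a = (k, k - 1, Col.flip C))) ∨
    (∃ b₁ b₂ c rest j, w = (b₁, b₂, c) :: rest ∧ c ≠ Col.G ∧ Odd w.length ∧
      w.length < 2 * d ∧ 1 ≤ j ∧ j ≤ d - 1 ∧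
      a = (nthAvoid 1 (bplus b₂) j, nthAvoid 1 b₁ j, Col.G)) ∨
    (∃ b₁ b₂ d₁ d₂ c rest j, w = (b₁, b₂, Col.G) :: (d₁, d₂, c) :: rest ∧ c ≠ Col.G ∧
      Even w.length ∧ w.length < 2 * d ∧ 1 ≤ j ∧ j ≤ d - 1 ∧
      (a = (nthAvoid 1 b₂ j, nthAvoid 0 b₁ j, c) ∨ a = (j + 1, j, Col.flip c))) := by
  generalize hz : a :: w = z at h
  cases h with
  | nil => cases hz
  | base k h1 h2 =>
      injection hz with h1 h2; subst h1; subst h2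
      exact Or.inl ⟨k, ‹_›, ‹_›, rfl, Or.inl rfl⟩
  | base' k h1 h2 =>
      injection hz with g1 g2; subst g1; subst g2
      exact Or.inl ⟨k, by omega, h2, rfl, Or.inr ⟨h1, rfl⟩⟩
  | odd b₁ b₂ c rest hc hv hodd hlt j hj1 hj2 =>
      injection hz with g1 g2; subst g1; subst g2
      exact Or.inr (Or.inl ⟨b₁, b₂, c, rest, j, rfl, hc, hodd, hlt, hj1, hj2, rfl⟩)
  | evenSame b₁ b₂ d₁ d₂ c rest hc hv heven hlt j hj1 hj2 =>
      injection hz with g1 g2; subst g1; subst g2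
      exact Or.inr (Or.inr ⟨b₁, b₂, d₁, d₂, c, rest, j, rfl, hc, heven, hlt, hj1, hj2, Or.inl rfl⟩)
  | evenFlip b₁ b₂ d₁ d₂ c rest hc hv heven hlt j hj1 hj2 =>
      injection hz with g1 g2; subst g1; subst g2
      exact Or.inr (Or.inr ⟨b₁, b₂, d₁, d₂, c, rest, j, rfl, hc, heven, hlt, hj1, hj2, Or.inr rfl⟩)


lemma childUnique {C : Col} {d : ℕ} {c₁ x y : ℕ} {cc : Col} {w : List Nd3}
    (hC : C ≠ Col.G)
    (h1 : VH C d ((c₁, x, cc) :: w)) (h2 : VH C d ((c₁, y, cc) :: w)) : x = y := by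
  rcases child_shape h1 with ⟨k, hk1, hk2, hw, ha⟩ |
      ⟨b₁, b₂, c, rest, j, hw, hc, hodd, hlt, hj1, hj2, ha⟩ |
      ⟨b₁, b₂, d₁, d₂, c, rest, j, hw, hc, hev, hlt, hj1, hj2, ha⟩ <;>
    rcases child_shape h2 with ⟨k', hk1', hk2', hw', ha'⟩ |
      ⟨b₁', b₂', c', rest', j', hw', hc', hodd', hlt', hj1', hj2', ha'⟩ |
      ⟨b₁', b₂', d₁', d₂', c', rest', j', hw', hc', hev', hlt', hj1', hj2', ha'⟩ <;>
    subst hw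
  · simp only [Prod.mk.injEq] at ha ha'
    rcases ha with ⟨e1, e2, e3⟩ | ⟨hk, e1, e2, e3⟩ <;>
      rcases ha' with ⟨f1, f2, f3⟩ | ⟨hk', f1, f2, f3⟩
    · omega
    · exact absurd (e3.symm.trans f3) (Ne.symm (flip_ne_self hC))
    · exact absurd (f3.symm.trans e3) (Ne.symm (flip_ne_self hC))
    · omega
  · simp at hw'
  · simp at hw'
  · simp at hw'
  · simp only [List.cons.injEq, Prod.mk.injEq] at hw'
    obtain ⟨⟨rfl, rfl, rfl⟩, rfl⟩ := hw'
    simp only [Prod.mk.injEq] at ha ha'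
    obtain ⟨e1, e2, e3⟩ := ha
    obtain ⟨f1, f2, f3⟩ := ha'
    have : j = j' := nthAvoid_inj hj1 hj1' (e1.symm.trans f1)
    subst this
    exact e2.trans f2.symm
  · simp only [List.cons.injEq, Prod.mk.injEq] at hw'
    exact absurd hw'.1.2.2 hc
  · simp at hw'
  · simp only [List.cons.injEq, Prod.mk.injEq] at hw'
    exact absurd hw'.1.2.2.symm hc'
  · simp only [List.cons.injEq, Prod.mk.injEq] at hw'
    obtain ⟨⟨rfl, rfl, -⟩, ⟨rfl, rfl, rfl⟩, rfl⟩ := hw'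
    simp only [Prod.mk.injEq] at ha ha'
    rcases ha with ⟨e1, e2, e3⟩ | ⟨e1, e2, e3⟩ <;>
      rcases ha' with ⟨f1, f2, f3⟩ | ⟨f1, f2, f3⟩
    · have : j = j' := nthAvoid_inj hj1 hj1' (e1.symm.trans f1)
      subst this
      exact e2.trans f2.symm
    · exact absurd (e3.symm.trans f3) (Ne.symm (flip_ne_self hc))
    · exact absurd (f3.symm.trans e3) (Ne.symm (flip_ne_self hc))
    · omega

lemma no_conflict {C : Col} {d : ℕ} {b₁ b₂ k : ℕ} {cv cc : Col} {rest : List Nd3}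
    (hC : C ≠ Col.G)
    (h : VH C d ((b₂, k, cc) :: (b₁, b₂, cv) :: rest)) : cc ≠ fH rest := by
  intro hcc
  rcases child_shape h with ⟨k', _, _, hw, _⟩ |
      ⟨b₁', b₂', c', rest', j, hw, hc, _, _, hj1, _, ha⟩ |
      ⟨b₁', b₂', d₁', d₂', c', rest', j, hw, hc, _, _, hj1, _, ha⟩
  · simp at hw
  · simp only [List.cons.injEq, Prod.mk.injEq] at hw ha
    obtain ⟨⟨rfl, rfl, rfl⟩, rfl⟩ := hw
    exact absurd ha.1.symm (nthAvoid_bplus_ne hj1)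
  · simp only [List.cons.injEq, Prod.mk.injEq] at hw ha
    obtain ⟨⟨rfl, rfl, rfl⟩, rfl⟩ := hw
    rcases ha with ⟨e1, e2, e3⟩ | ⟨e1, e2, e3⟩
    · exact absurd e1.symm (nthAvoid_ne hj1)
    · simp only [fH] at hcc
      exact absurd (e3.symm.trans hcc) (flip_ne_self hc)

lemma port_to_parent {C : Col} {d : ℕ} {b₁ b₂ : ℕ} {cv : Col} {rest : List Nd3}
    (hC : C ≠ Col.G) (hx : VH C d ((b₁, b₂, cv) :: rest)) :
    pH C d ((b₁, b₂, cv) :: rest) (b₂, fH rest) = some (rest, (b₁, cv)) := by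
  have hno : ¬ ∃ c₂, VH C d (((b₂, fH rest).1, c₂, (b₂, fH rest).2) ::
      (b₁, b₂, cv) :: rest) := by
    rintro ⟨k, hk⟩
    exact no_conflict hC hk rfl
  rw [pH, dif_neg hno]
  simp [hx]

lemma port_to_child {C : Col} {d : ℕ} {c₁ c₂ : ℕ} {cc : Col} {w : List Nd3}
    (hC : C ≠ Col.G) (h : VH C d ((c₁, c₂, cc) :: w)) :
    pH C d w (c₁, cc) = some ((c₁, c₂, cc) :: w, (c₂, fH w)) := by
  have hex : ∃ k, VH C d (((c₁, cc).1, k, (c₁, cc).2) :: w) := ⟨c₂, h⟩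
  rw [pH, dif_pos hex]
  have hch : hex.choose = c₂ := childUnique hC hex.choose_spec h
  rw [hch]

lemma child_transfer {C : Col} {d : ℕ} {v u : List Nd3} (hC : C ≠ Col.G)
    (e : Nd3) (ext₂ : List Nd3)
    (hu : VH C d ((e :: ext₂) ++ u))
    (hlu : ((e :: ext₂) ++ u).length < 2 * d)
    (hpv : Even v.length) (hpu : Even u.length)
    (a : Nd3) (h : VH C d (a :: ((e :: ext₂) ++ v))) :
    VH C d (a :: ((e :: ext₂) ++ u)) := by
  rcases child_shape h with ⟨k, _, _, hw, _⟩ |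
      ⟨b₁, b₂, c, rest, j, hw, hc, hodd, hlt, hj1, hj2, ha⟩ |
      ⟨b₁, b₂, d₁, d₂, c, rest, j, hw, hc, hev, hlt, hj1, hj2, ha⟩
  · simp at hw
  · rw [List.cons_append, List.cons.injEq] at hw
    obtain ⟨rfl, hrest⟩ := hw
    subst ha
    refine VH.odd b₁ b₂ c (ext₂ ++ u) hc hu ?_ (by simpa using hlu) j hj1 hj2
    obtain ⟨m, hm⟩ := hpv
    obtain ⟨m', hm'⟩ := hpu
    simp only [List.length_cons, List.length_append, Nat.odd_iff] at hodd ⊢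
    omega
  · cases ext₂ with
    | nil =>
        rw [List.cons_append, List.nil_append, List.cons.injEq] at hw
        obtain ⟨rfl, rfl⟩ := hw
        obtain ⟨m, hm⟩ := hpv
        obtain ⟨m', hm'⟩ := hev
        simp only [List.cons_append, List.nil_append, List.length_cons] at hm' hm
        omega
    | cons e₂ ext₃ =>
        rw [List.cons_append, List.cons_append, List.cons.injEq, List.cons.injEq] at hw
        obtain ⟨rfl, rfl, hrest⟩ := hw
        have hu' : VH C d ((b₁, b₂, Col.G) :: (d₁, d₂, c) :: (ext₃ ++ u)) := by
          exact hu
        have hevu : Even ((b₁, b₂, Col.G) :: (d₁, d₂, c) :: (ext₃ ++ u)).length := by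
          obtain ⟨m, hm⟩ := hpv
          obtain ⟨m', hm'⟩ := hpu
          simp only [List.cons_append, List.length_cons, List.length_append,
            Nat.even_iff] at hev ⊢
          omega
        have hltu : ((b₁, b₂, Col.G) :: (d₁, d₂, c) :: (ext₃ ++ u)).length < 2 * d := by
          simpa using hlu
        rcases ha with rfl | rfl
        · exact VH.evenSame b₁ b₂ d₁ d₂ c (ext₃ ++ u) hc hu' hevu hltu j hj1 hj2
        · exact VH.evenFlip b₁ b₂ d₁ d₂ c (ext₃ ++ u) hc hu' hevu hltu j hj1 hj2

lemma adj_len {C : Col} {d : ℕ} {x y : List Nd3} (h : (HGraph C d).Adj x y) :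
    x.length ≤ y.length + 1 := by
  obtain ⟨_, _, a, rfl | rfl⟩ := h <;> simp <;> omega

lemma walk_len_ge' {C : Col} {d : ℕ} :
    ∀ {x y : List Nd3} (p : (HGraph C d).Walk x y), x.length ≤ p.length + y.length := by
  intro x y p
  induction p with
  | nil => simp
  | cons h p ih =>
      have := adj_len h
      simp only [SimpleGraph.Walk.length_cons]
      omega

lemma walk_len_ge {C : Col} {d : ℕ} {x : List Nd3} (p : (HGraph C d).Walk x []) :
    x.length ≤ p.length := by
  simpa using walk_len_ge' p

lemma dist_eq_length {C : Col} {d : ℕ} {x : List Nd3} (h : VH C d x) :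
    (HGraph C d).dist x [] = x.length := by
  have hwalk : ∃ p : (HGraph C d).Walk x [], p.length = x.length := by
    induction x with
    | nil => exact ⟨SimpleGraph.Walk.nil, rfl⟩
    | cons a w ih =>
        obtain ⟨p, hp⟩ := ih (VH_tail h)
        have hadj : (HGraph C d).Adj (a :: w) w := ⟨h, VH_tail h, a, Or.inr rfl⟩
        exact ⟨SimpleGraph.Walk.cons hadj p, by simp [hp]⟩
  obtain ⟨p, hp⟩ := hwalk
  refine le_antisymm (hp ▸ SimpleGraph.dist_le p) ?_
  obtain ⟨q, hq⟩ := SimpleGraph.Reachable.exists_walk_length_eq_dist ⟨p⟩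
  rw [← hq]
  exact walk_len_ge q

lemma neighbour_shape {C : Col} {d : ℕ} {v : List Nd3} (e : Nd3) (ext₂ : List Nd3)
    {z : List Nd3} (h : (HGraph C d).Adj ((e :: ext₂) ++ v) z) :
    (∃ a : Nd3, z = a :: ((e :: ext₂) ++ v)) ∨ z = ext₂ ++ v := by
  obtain ⟨_, _, a, rfl | hxa⟩ := h
  · exact Or.inl ⟨a, rfl⟩
  · rw [List.cons_append, List.cons.injEq] at hxa
    exact Or.inr hxa.2.symm

lemma deg_transfer {C : Col} {d : ℕ} {v u : List Nd3} (hC : C ≠ Col.G)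
    (e : Nd3) (ext₂ : List Nd3)
    (hv : VH C d ((e :: ext₂) ++ v)) (hu : VH C d ((e :: ext₂) ++ u))
    (hlv : ((e :: ext₂) ++ v).length < 2 * d) (hlu : ((e :: ext₂) ++ u).length < 2 * d)
    (hpv : Even v.length) (hpu : Even u.length) :
    deg (HGraph C d) ((e :: ext₂) ++ v) = deg (HGraph C d) ((e :: ext₂) ++ u) := by
  classical
  set x := (e :: ext₂) ++ v with hxdef
  set x' := (e :: ext₂) ++ u with hxdef'
  set m : List Nd3 → List Nd3 :=
    fun y => if y.length = x.length + 1 then (y.head?.getD (0, 0, Col.G)) :: x' else ext₂ ++ u with hmdef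
  have hmc : ∀ a : Nd3, m (a :: x) = a :: x' := by
    intro a; simp [hmdef]
  have hmp : m (ext₂ ++ v) = ext₂ ++ u := by
    have : (ext₂ ++ v).length ≠ x.length + 1 := by
      simp only [hxdef, List.cons_append, List.length_cons, List.length_append]
      omega
    simp only [hmdef]
    rw [if_neg this]
  have himg : m '' {y | (HGraph C d).Adj x y} = {y | (HGraph C d).Adj x' y} := by
    ext y'
    constructor
    · rintro ⟨z, hz, rfl⟩
      rcases neighbour_shape e ext₂ hz with ⟨a, rfl⟩ | rfl
      · rw [hmc]
        exact ⟨hu, child_transfer hC e ext₂ hu hlu hpv hpu a hz.2.1, a, Or.inl rfl⟩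
      · rw [hmp]
        exact ⟨hu, VH_tail hu, e, Or.inr rfl⟩
    · intro hy'
      rcases neighbour_shape e ext₂ hy' with ⟨a, rfl⟩ | rfl
      · refine ⟨a :: x, ?_, hmc a⟩
        exact ⟨hv, child_transfer hC e ext₂ hv hlv hpu hpv a hy'.2.1, a, Or.inl rfl⟩
      · refine ⟨ext₂ ++ v, ?_, hmp⟩
        exact ⟨hv, VH_tail hv, e, Or.inr rfl⟩
  have hinj : Set.InjOn m {y | (HGraph C d).Adj x y} := by
    intro z₁ h₁ z₂ h₂ hm
    rcases neighbour_shape e ext₂ h₁ with ⟨a₁, rfl⟩ | rfl <;>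
      rcases neighbour_shape e ext₂ h₂ with ⟨a₂, rfl⟩ | rfl
    · rw [hmc, hmc, List.cons.injEq] at hm
      rw [hm.1]
    · rw [hmc, hmp] at hm
      have := congrArg List.length hm
      simp [hxdef, hxdef'] at this
      omega
    · rw [hmc, hmp] at hm
      have := congrArg List.length hm
      simp [hxdef, hxdef'] at this
      omega
    · rfl
  show {y | (HGraph C d).Adj x y}.ncard = {y | (HGraph C d).Adj x' y}.ncard
  rw [← himg, Set.ncard_image_of_injOn hinj]

lemma SVBisim_mono {V V' X N : Type} {G : SimpleGraph V} {G' : SimpleGraph V'}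
    {f : V → X} {f' : V' → X} {p : V → N → Option (V × N)}
    {p' : V' → N → Option (V' × N)} :
    ∀ (r : ℕ) {v : V} {v' : V'}, SVBisim G G' f f' p p' (r + 1) v v' →
      SVBisim G G' f f' p p' r v v'
  | 0, v, v', h => h.1
  | r + 1, v, v', h =>
    ⟨h.1,
     fun w hw => by
       obtain ⟨w', h1, h2, h3⟩ := h.2.1 w hw
       exact ⟨w', h1, SVBisim_mono r h2, h3⟩,
     fun w' hw' => by
       obtain ⟨w, h1, h2, h3⟩ := h.2.2 w' hw'
       exact ⟨w, h1, SVBisim_mono r h2, h3⟩⟩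

lemma main_bisim {C : Col} (hC : C ≠ Col.G) {d : ℕ} {v u : List Nd3}
    (hv : VH C d v) (hu : VH C d u) (hpv : Even v.length) (hpu : Even u.length)
    (t : ℕ) :
    ∀ (ext : List Nd3),
      SVBisim (HGraph C d) (HGraph C d) fH fH (pH C d) (pH C d) t v u →
      VH C d (ext ++ v) → VH C d (ext ++ u) →
      (ext ++ v).length < 2 * d - t → (ext ++ u).length < 2 * d - t →
      SVBisim (HGraph C d) (HGraph C d) fH fH (pH C d) (pH C d) t
        (ext ++ v) (ext ++ u) := by
  induction t with
  | zero =>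
      intro ext hb hwv hwu hl1 hl2
      cases ext with
      | nil => exact hb
      | cons e ext₂ =>
          obtain ⟨e1, e2, e3⟩ := e
          have hL1 : (((e1, e2, e3) :: ext₂) ++ v).length < 2 * d := by omega
          have hL2 : (((e1, e2, e3) :: ext₂) ++ u).length < 2 * d := by omega
          exact ⟨deg_transfer hC _ ext₂ hwv hwu hL1 hL2 hpv hpu, rfl⟩
  | succ t ih =>
      intro ext hb hwv hwu hl1 hl2
      cases ext with
      | nil => exact hb
      | cons e ext₂ =>
          obtain ⟨e1, e2, e3⟩ := e
          have hL1 : (((e1, e2, e3) :: ext₂) ++ v).length < 2 * d := by omega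
          have hL2 : (((e1, e2, e3) :: ext₂) ++ u).length < 2 * d := by omega
          have hlen1 : ext₂.length + v.length + 1 < 2 * d - (t + 1) := by
            simpa using hl1
          have hlen2 : ext₂.length + u.length + 1 < 2 * d - (t + 1) := by
            simpa using hl2
          refine ⟨⟨deg_transfer hC _ ext₂ hwv hwu hL1 hL2 hpv hpu, rfl⟩, ?_, ?_⟩
          · -- forward
            intro w hw
            rcases neighbour_shape (C := C) (d := d) (e1, e2, e3) ext₂ hw with ⟨a, rfl⟩ | rfl
            · -- child
              obtain ⟨a1, a2, a3⟩ := a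
              have hwV : VH C d ((a1, a2, a3) :: (((e1, e2, e3) :: ext₂) ++ v)) := hw.2.1
              have hwu' : VH C d ((a1, a2, a3) :: (((e1, e2, e3) :: ext₂) ++ u)) :=
                child_transfer hC _ ext₂ hwu hL2 hpv hpu _ hwV
              refine ⟨(a1, a2, a3) :: (((e1, e2, e3) :: ext₂) ++ u),
                ⟨hwu, hwu', _, Or.inl rfl⟩, ?_, ?_⟩
              · have := ih ((a1, a2, a3) :: (e1, e2, e3) :: ext₂) (SVBisim_mono t hb)
                  hwV hwu' (by simp; omega) (by simp; omega)
                exact this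
              · exact ⟨(a2, e3), (a1, a3), (a1, a3),
                  port_to_parent hC hwV, port_to_parent hC hwu'⟩
            · -- parent
              refine ⟨ext₂ ++ u, ⟨hwu, VH_tail hwu, (e1, e2, e3), Or.inr rfl⟩, ?_, ?_⟩
              · cases ext₂ with
                | nil => exact SVBisim_mono t hb
                | cons f ext₃ =>
                    exact ih (f :: ext₃) (SVBisim_mono t hb) (VH_tail hwv) (VH_tail hwu)
                      (by simp at hlen1 ⊢; omega) (by simp at hlen2 ⊢; omega)
              · exact ⟨(e1, e3), (e2, fH (ext₂ ++ v)), (e2, fH (ext₂ ++ u)),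
                  port_to_child hC hwv, port_to_child hC hwu⟩
          · -- backward
            intro w' hw'
            rcases neighbour_shape (C := C) (d := d) (e1, e2, e3) ext₂ hw' with ⟨a, rfl⟩ | rfl
            · obtain ⟨a1, a2, a3⟩ := a
              have hwV' : VH C d ((a1, a2, a3) :: (((e1, e2, e3) :: ext₂) ++ u)) := hw'.2.1
              have hwv' : VH C d ((a1, a2, a3) :: (((e1, e2, e3) :: ext₂) ++ v)) :=
                child_transfer hC _ ext₂ hwv hL1 hpu hpv _ hwV'
              refine ⟨(a1, a2, a3) :: (((e1, e2, e3) :: ext₂) ++ v),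
                ⟨hwv, hwv', _, Or.inl rfl⟩, ?_, ?_⟩
              · exact ih ((a1, a2, a3) :: (e1, e2, e3) :: ext₂) (SVBisim_mono t hb)
                  hwv' hwV' (by simp; omega) (by simp; omega)
              · exact ⟨(a2, e3), (a1, a3), (a1, a3),
                  port_to_parent hC hwv', port_to_parent hC hwV'⟩
            · refine ⟨ext₂ ++ v, ⟨hwv, VH_tail hwv, (e1, e2, e3), Or.inr rfl⟩, ?_, ?_⟩
              · cases ext₂ with
                | nil => exact SVBisim_mono t hb
                | cons f ext₃ =>
                    exact ih (f :: ext₃) (SVBisim_mono t hb) (VH_tail hwv) (VH_tail hwu)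
                      (by simp at hlen1 ⊢; omega) (by simp at hlen2 ⊢; omega)
              · exact ⟨(e1, e3), (e2, fH (ext₂ ++ v)), (e2, fH (ext₂ ++ u)),
                  port_to_child hC hwv, port_to_child hC hwu⟩

/-- Let `v̂, û` be grey nodes of `Ĥ_{C,d}` whose underlying nodes `v, u` of
`H_{C,d}` are `t`-SV-bisimilar. If `w = ext ++ v` is in the domain of the
partial isomorphism `f_{v,u}` (the first appended triple `c₁`, the last
element of the reversed list `ext`, has colour `C̄`, and both `ext ++ v` and
`f_{v,u}(w) = ext ++ u` are nodes of `H_{C,d}`), and both `w` and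
`f_{v,u}(w)` are at distance `< 2d − t` from the root, then `w` and
`f_{v,u}(w)` are `t`-SV-bisimilar in `(H_{C,d}, f_C, p_C)`. -/
theorem bisim_subtrees (C : Col) (hC : C ≠ Col.G) (d : ℕ) (hd : 2 ≤ d)
    (t : ℕ) (v u : List Nd3)
    (hv : VH C d v) (hu : VH C d u)
    (hvhat : inHat C v) (huhat : inHat C u)
    (hvg : fH v = Col.G) (hug : fH u = Col.G)
    (hbisim : SVBisim (HGraph C d) (HGraph C d) fH fH
      (pH C d) (pH C d) t v u)
    (ext : List Nd3)
    (hext : ext = [] ∨ ∃ c : Nd3, ext.getLast? = some c ∧ c.2.2 = Col.flip C)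
    (hw : VH C d (ext ++ v)) (hw' : VH C d (ext ++ u))
    (hdist : (HGraph C d).dist (ext ++ v) [] < 2 * d - t)
    (hdist' : (HGraph C d).dist (ext ++ u) [] < 2 * d - t) :
    SVBisim (HGraph C d) (HGraph C d) fH fH
      (pH C d) (pH C d) t (ext ++ v) (ext ++ u) := by
  have hpv := grey_even hC hv hvg
  have hpu := grey_even hC hu hug
  have hlen1 : (ext ++ v).length < 2 * d - t := by
    rw [← dist_eq_length hw]; exact hdist
  have hlen2 : (ext ++ u).length < 2 * d - t := by
    rw [← dist_eq_length hw']; exact hdist'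
  exact main_bisim hC hv hu hpv hpu t ext hbisim hw hw' hlen1 hlen2

end Paper
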